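/- Let t₁ : ℝ → ℝ assign to each a the unique real solution t of t = cosh(t + a)·e^{-(t+a)}. Then t₁(a) → +∞ as a → -∞ and t₁(a) → 1/2 as a → +∞. -/
import Mathlib

open Real Filter

theorem stmt2 (t₁ : ℝ → ℝ)
    (h : ∀ a t : ℝ, t = Real.cosh (t + a) * Real.exp (-(t + a)) ↔ t = t₁ a) :
    Filter.Tendsto t₁ Filter.atBot Filter.atTop ∧
    Filter.Tendsto t₁ Filter.atTop (nhds (1 / 2)) := by
  have heq : ∀ a, t₁ a = (1 + Real.exp (-(2 * (t₁ a + a)))) / 2 := by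
    intro a
    have h0 := (h a (t₁ a)).mpr rfl
    rw [Real.cosh_eq] at h0
    have h1 : Real.exp (t₁ a + a) * Real.exp (-(t₁ a + a)) = 1 := by
      rw [← Real.exp_add]; rw [show t₁ a + a + -(t₁ a + a) = 0 by ring]; exact Real.exp_zero
    have h2 : Real.exp (-(t₁ a + a)) * Real.exp (-(t₁ a + a))
        = Real.exp (-(2 * (t₁ a + a))) := by
      rw [← Real.exp_add]; ring_nf
    nlinarith [h0, h1, h2]
  constructor
  · -- t₁ a ≥ -a/2
    have hb : ∀ a : ℝ, -a / 2 ≤ t₁ a := by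
      intro a
      by_contra hc
      push_neg at hc
      have he := heq a
      have h3 : Real.exp (-a) < Real.exp (-(2 * (t₁ a + a))) := by
        apply Real.exp_lt_exp.mpr; linarith
      have h4 : -a + 1 ≤ Real.exp (-a) := by linarith [Real.add_one_le_exp (-a)]
      linarith
    have hmain : Tendsto (fun a : ℝ => -a / 2) atBot atTop := by
      apply Filter.Tendsto.atTop_div_const (by norm_num)
      exact tendsto_neg_atBot_atTop
    exact tendsto_atTop_mono hb hmain
  · have hlow : ∀ a : ℝ, 1 / 2 ≤ t₁ a := by
      intro a
      have := heq a
      linarith [Real.exp_pos (-(2 * (t₁ a + a)))]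
    have hup : ∀ a : ℝ, t₁ a ≤ 1 / 2 + Real.exp (-1 - 2 * a) / 2 := by
      intro a
      have he := heq a
      have h3 : Real.exp (-(2 * (t₁ a + a))) ≤ Real.exp (-1 - 2 * a) := by
        apply Real.exp_le_exp.mpr; linarith [hlow a]
      linarith
    have hupper : Tendsto (fun a : ℝ => 1 / 2 + Real.exp (-1 - 2 * a) / 2) atTop (nhds (1 / 2)) := by
      have h5 : Tendsto (fun a : ℝ => -1 - 2 * a) atTop atBot := by
        apply tendsto_atBot_add_const_left
        exact (tendsto_neg_atTop_atBot).comp (tendsto_atTop_atTop_of_monotone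
          (fun x y hxy => by linarith) (fun b => ⟨b / 2, by linarith⟩))
      have h6 : Tendsto (fun a : ℝ => Real.exp (-1 - 2 * a)) atTop (nhds 0) :=
        Real.tendsto_exp_atBot.comp h5
      have := (h6.div_const 2).const_add (1 / 2)
      simpa using this
    exact tendsto_of_tendsto_of_tendsto_of_le_of_le
      (tendsto_const_nhds) hupper hlow hup
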